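/- For a Hermitian positive definite matrix Q and Hermitian positive definite F with F ⪯ I (so det F ≤ 1), the value −tr(Q F) + log det Q + d ≤ log det(F⁻¹) for all Hermitian positive definite Q. -/

import Mathlib

open Matrix ComplexOrder

lemma trace_eq_sum_eigs {n : Type*} [Fintype n] [DecidableEq n] {S : Matrix n n ℂ}
    (hS : S.PosSemidef) : S.trace = ∑ i, (hS.1.eigenvalues i : ℂ) := by
  conv_lhs => rw [hS.1.spectral_theorem]
  rw [Unitary.conjStarAlgAut_apply, Matrix.trace_mul_cycle, (Matrix.mem_unitaryGroup_iff').mp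
    (hS.1.eigenvectorUnitary).2, one_mul, Matrix.trace_diagonal]
  rfl

lemma posdef_det_re {n : Type*} [Fintype n] [DecidableEq n] {M : Matrix n n ℂ}
    (hM : M.PosDef) : 0 < M.det.re ∧ M.det.im = 0 := by
  have h := hM.det_pos
  rw [Complex.lt_def] at h
  exact ⟨by simpa using h.1, by simpa using h.2.symm⟩

theorem stmt_11 {d : ℕ} (hd : 1 ≤ d)
    (Q F : Matrix (Fin d) (Fin d) ℂ)
    (hQ : Q.PosDef) (hF : F.PosDef)
    (hFI : (1 - F).PosSemidef) :
    -((Q * F).trace.re) + Real.log Q.det.re + d ≤ Real.log (F⁻¹).det.re := by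
  classical
  set B := (open scoped MatrixOrder in CFC.sqrt F) with hBdef
  have hB : B.PosSemidef := by open scoped MatrixOrder in exact (CFC.sqrt_nonneg F).posSemidef
  have hBB : B * B = F := by open scoped MatrixOrder in exact CFC.sqrt_mul_sqrt_self F hF.posSemidef.nonneg
  set S := B * Q * B with hSdef
  have hS : S.PosSemidef := by
    have := hQ.posSemidef.mul_mul_conjTranspose_same B
    rwa [hB.1.eq] at this
  -- trace equality
  have htr : (Q * F).trace = S.trace := by
    rw [hSdef, Matrix.trace_mul_cycle, hBB, Matrix.trace_mul_comm]
  -- determinant equality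
  have hdet : S.det = Q.det * F.det := by
    rw [hSdef, Matrix.det_mul, Matrix.det_mul, ← hBB, Matrix.det_mul]; ring
  obtain ⟨hQre, hQim⟩ := posdef_det_re hQ
  obtain ⟨hFre, hFim⟩ := posdef_det_re hF
  have hdetre : S.det.re = Q.det.re * F.det.re := by
    rw [hdet, Complex.mul_re, hQim, hFim]; ring
  set μ := hS.1.eigenvalues with hμdef
  have hμnn : ∀ i, 0 ≤ μ i := hS.eigenvalues_nonneg
  have htrμ : S.trace.re = ∑ i, μ i := by
    rw [trace_eq_sum_eigs hS]
    simp [Complex.re_sum]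
    rfl
  have hdetμ : S.det.re = ∏ i, μ i := by
    rw [hS.1.det_eq_prod_eigenvalues]
    norm_cast
  have hprodpos : 0 < ∏ i, μ i := by
    rw [← hdetμ, hdetre]; positivity
  have hμpos : ∀ i, 0 < μ i := fun i => by
    rcases (hμnn i).lt_or_eq with h | h
    · exact h
    · exfalso
      have : (∏ j, μ j) = 0 := Finset.prod_eq_zero (Finset.mem_univ i) h.symm
      rw [this] at hprodpos; exact lt_irrefl 0 hprodpos
  -- key inequality
  have hkey : Real.log (∏ i, μ i) + d ≤ ∑ i, μ i := by
    rw [Real.log_prod (fun i _ => (hμpos i).ne')]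
    have : ∀ i ∈ Finset.univ, Real.log (μ i) ≤ μ i - 1 :=
      fun i _ => Real.log_le_sub_one_of_pos (hμpos i)
    calc (∑ i, Real.log (μ i)) + d ≤ (∑ i, (μ i - 1)) + d :=
          add_le_add_left (Finset.sum_le_sum this) d
      _ = ∑ i, μ i := by
          rw [Finset.sum_sub_distrib]
          simp
  -- inverse determinant
  have hinv : (F⁻¹).det.re = (F.det.re)⁻¹ := by
    rw [Matrix.det_nonsing_inv]
    have : F.det = (F.det.re : ℂ) := by
      apply Complex.ext <;> simp [hFim]
    rw [this, Ring.inverse_eq_inv]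
    norm_cast
  rw [hinv, Real.log_inv]
  have hlogsum : Real.log Q.det.re + Real.log F.det.re = Real.log (∏ i, μ i) := by
    rw [← hdetμ, hdetre, Real.log_mul hQre.ne' hFre.ne']
  rw [htr, htrμ]
  linarith [hkey, hlogsum]
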